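/- Let C ⊆ ℝ^m be a nonempty closed convex cone, γ ∈ (0,1), and θ, z ∈ ℝ^m. Define g(z̃) = ‖θ‖²/2 - (1/2)‖θ - Π_C(z̃ + θ/(1-γ))‖² - ((1-γ)/2)‖z̃ - Π_C(z̃ + θ/(1-γ))‖² and f(z) = (γ(1-γ)/2)·dist²((z+θ)/(1-γ), C) - γ‖z+θ‖²/(2(1-γ)) - ‖z‖²/2. Then (1-γ)·g(z/(1-γ)) = f(z), and both equal -(γ/(2(1-γ)))‖Π_C(z+θ)‖² - ‖z‖²/2. -/

import Mathlib

open RealInnerProductSpace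

lemma proj_vi {E : Type*} [NormedAddCommGroup E] [InnerProductSpace ℝ E]
    {C : Set E} (hconv : Convex ℝ C) {u v : E} (hv : v ∈ C)
    (hmin : ‖u - v‖ = Metric.infDist u C) :
    ∀ w ∈ C, ⟪u - v, w - v⟫ ≤ 0 := by
  have h : ‖u - v‖ = ⨅ w : C, ‖u - w‖ := by
    rw [hmin, Metric.infDist_eq_iInf]; simp [dist_eq_norm]
  exact (norm_eq_iInf_iff_real_inner_le_zero hconv hv).mp h

theorem power_driver_sekine_equivalence (m : ℕ) (γ : ℝ) (hγ : γ ∈ Set.Ioo (0:ℝ) 1)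
    (z θ : EuclideanSpace ℝ (Fin m))
    (C : Set (EuclideanSpace ℝ (Fin m)))
    (hC : IsClosed C) (hconv : Convex ℝ C) (h0 : (0 : EuclideanSpace ℝ (Fin m)) ∈ C)
    (hcone : ∀ c ∈ C, ∀ r : ℝ, 0 ≤ r → r • c ∈ C)
    (p : EuclideanSpace ℝ (Fin m)) (hp : p ∈ C)
    (hpmin : ‖(1 / (1 - γ)) • (z + θ) - p‖ = Metric.infDist ((1 / (1 - γ)) • (z + θ)) C)
    (q : EuclideanSpace ℝ (Fin m)) (hq : q ∈ C)
    (hqmin : ‖(z + θ) - q‖ = Metric.infDist (z + θ) C) :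
    (1 - γ) * (‖θ‖ ^ 2 / 2 - (1 / 2) * ‖θ - p‖ ^ 2
        - (1 - γ) / 2 * ‖(1 / (1 - γ)) • z - p‖ ^ 2)
      = γ * (1 - γ) / 2 * (Metric.infDist ((1 / (1 - γ)) • (z + θ)) C) ^ 2
        - γ * ‖z + θ‖ ^ 2 / (2 * (1 - γ)) - ‖z‖ ^ 2 / 2 ∧
    γ * (1 - γ) / 2 * (Metric.infDist ((1 / (1 - γ)) • (z + θ)) C) ^ 2
        - γ * ‖z + θ‖ ^ 2 / (2 * (1 - γ)) - ‖z‖ ^ 2 / 2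
      = -(γ / (2 * (1 - γ))) * ‖q‖ ^ 2 - ‖z‖ ^ 2 / 2 := by
  obtain ⟨hγ0, hγ1⟩ := hγ
  have hs : (0:ℝ) < 1 - γ := by linarith
  set s : ℝ := 1 - γ with hs_def
  set a : EuclideanSpace ℝ (Fin m) := (1 / (1 - γ)) • (z + θ) with ha
  have hvp := proj_vi hconv hp hpmin
  -- orthogonality
  have h2p : (2:ℝ) • p ∈ C := hcone p hp 2 (by norm_num)
  have h1 := hvp 0 h0
  have h2 := hvp ((2:ℝ) • p) h2p
  have e1 : ⟪a - p, (0:EuclideanSpace ℝ (Fin m)) - p⟫ = -⟪a - p, p⟫ := by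
    simp [inner_neg_right]
  have e2 : ⟪a - p, (2:ℝ) • p - p⟫ = ⟪a - p, p⟫ := by
    have : (2:ℝ) • p - p = p := by rw [two_smul]; abel
    rw [this]
  have horth : ⟪a - p, p⟫ = 0 := by rw [e1] at h1; rw [e2] at h2; linarith
  -- q = s • p
  have hsp : s • p ∈ C := hcone p hp s hs.le
  have hvq := proj_vi hconv hq hqmin
  have hvsp : ∀ w ∈ C, ⟪(z+θ) - s • p, w - s • p⟫ ≤ 0 := by
    intro w hw
    have hw' : s⁻¹ • w ∈ C := hcone w hw s⁻¹ (inv_nonneg.mpr hs.le)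
    have hineq := hvp (s⁻¹ • w) hw'
    have key : (z+θ) - s • p = s • (a - p) := by
      rw [ha, smul_sub, smul_smul]
      rw [show s * (1 / (1 - γ)) = 1 by field_simp; exact hs_def]
      simp
    have key2 : w - s • p = s • (s⁻¹ • w - p) := by
      rw [smul_sub, smul_smul]
      rw [show s * s⁻¹ = 1 from mul_inv_cancel₀ hs.ne']
      simp
    rw [key, key2, real_inner_smul_left, real_inner_smul_right]
    have := mul_nonneg (mul_nonneg hs.le hs.le) (neg_nonneg.mpr hineq)
    nlinarith
  have hqe : q = s • p := by
    have h3 := hvq (s • p) hsp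
    have h4 := hvsp q hq
    have hsum : ⟪s • p - q, s • p - q⟫ ≤ 0 := by
      have e : ⟪s • p - q, s • p - q⟫
          = ⟪(z+θ) - q, s • p - q⟫ + ⟪(z+θ) - s • p, q - s • p⟫ := by
        rw [show s • p - q = ((z+θ) - q) - ((z+θ) - s • p) by abel, inner_sub_left,
          show q - s • p = -(s • p - q) by abel, inner_neg_right]
        ring_nf
        rw [show ((z:EuclideanSpace ℝ (Fin m))+θ) - q - ((z+θ) - s • p) = s • p - q by abel]
      rw [e]; linarith
    have := real_inner_self_nonpos.mp hsum
    have : s • p - q = 0 := this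
    exact (sub_eq_zero.mp this).symm
  -- key fact: ⟪z+θ, p⟫ = s * ‖p‖^2
  have hbp : ⟪z + θ, p⟫ = s * ‖p‖ ^ 2 := by
    have h1 : ⟪a, p⟫ - ⟪p, p⟫ = 0 := by rw [← inner_sub_left]; exact horth
    have h2 : ⟪a, p⟫ = (1 / s) * ⟪z + θ, p⟫ := by
      rw [ha, real_inner_smul_left]
    have h3 : ⟪p, p⟫ = ‖p‖ ^ 2 := real_inner_self_eq_norm_sq p
    rw [h2, h3] at h1
    obtain ⟨I, hI⟩ : ∃ x, ⟪z + θ, p⟫ = x := ⟨_, rfl⟩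
    rw [hI] at h1 ⊢
    field_simp at h1
    linarith
  have hinf : Metric.infDist a C = ‖a - p‖ := hpmin.symm
  have hap : ‖a - p‖ ^ 2 = ‖a‖ ^ 2 - 2 * ⟪a, p⟫ + ‖p‖ ^ 2 := norm_sub_sq_real a p
  have hna : ‖a‖ ^ 2 = (1 / s) ^ 2 * ‖z + θ‖ ^ 2 := by
    rw [ha, norm_smul]
    rw [Real.norm_eq_abs, abs_of_pos (by positivity : (0:ℝ) < 1 / (1 - γ))]
    ring
  have hiap : ⟪a, p⟫ = (1 / s) * ⟪z + θ, p⟫ := by rw [ha, real_inner_smul_left]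
  have hθp : ‖θ - p‖ ^ 2 = ‖θ‖ ^ 2 - 2 * ⟪θ, p⟫ + ‖p‖ ^ 2 := norm_sub_sq_real θ p
  have hzp : ‖(1 / (1 - γ)) • z - p‖ ^ 2
      = (1 / s) ^ 2 * ‖z‖ ^ 2 - 2 * ((1 / s) * ⟪z, p⟫) + ‖p‖ ^ 2 := by
    rw [norm_sub_sq_real, real_inner_smul_left, norm_smul,
      Real.norm_eq_abs, abs_of_pos (by positivity : (0:ℝ) < 1 / (1 - γ))]
    ring
  have hnq : ‖q‖ ^ 2 = s ^ 2 * ‖p‖ ^ 2 := by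
    rw [hqe, norm_smul, Real.norm_eq_abs, abs_of_pos hs]
    ring
  have hadd : ⟪z + θ, p⟫ = ⟪z, p⟫ + ⟪θ, p⟫ := inner_add_left z θ p
  rw [hadd] at hbp hiap
  -- generalize to real variables
  obtain ⟨Iz, hIz⟩ : ∃ x, ⟪z, p⟫ = x := ⟨_, rfl⟩
  obtain ⟨It, hIt⟩ : ∃ x, ⟪θ, p⟫ = x := ⟨_, rfl⟩
  obtain ⟨nP, hnP⟩ : ∃ x, ‖p‖ = x := ⟨_, rfl⟩
  obtain ⟨nZ, hnZ⟩ : ∃ x, ‖z‖ = x := ⟨_, rfl⟩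
  obtain ⟨nT, hnT⟩ : ∃ x, ‖θ‖ = x := ⟨_, rfl⟩
  obtain ⟨nB, hnB⟩ : ∃ x, ‖z + θ‖ = x := ⟨_, rfl⟩
  rw [hIz, hIt, hnP] at hbp
  rw [hIz, hIt] at hiap
  rw [hnB] at hna
  rw [hIt, hnT, hnP] at hθp
  rw [hIz, hnZ, hnP] at hzp
  rw [hnP] at hnq
  rw [hiap, hna, hnP] at hap
  have hIt2 : It = s * nP ^ 2 - Iz := by linarith
  constructor
  · rw [hinf, hθp, hzp, hnT, hnZ, hnB, hap, hIt2, hs_def]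
    field_simp
    ring
  · rw [hinf, hnq, hnB, hnZ, hap, hIt2, hs_def]
    field_simp
    ring
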